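/- For every t in [t_3, 1], the 10×10 matrix C_t (defined blockwise: the upper-left 5×5 block has diagonal entries 2 and entry -ḡ_{(j-i-1 mod 5 mapped appropriately)} off-diagonal as in the paper, the upper-right block is -h(t) times the identity, the lower-left block is -2 times the identity, and the lower-right 5×5 block has diagonal 2, entries -1/t above the diagonal pattern and -t below, cyclically) has rank exactly 5. -/

import Mathlib

noncomputable def t3 : ℝ := (11 + 9 * Real.sqrt 2 - 3 * Real.sqrt (31 + 22 * Real.sqrt 2)) / 2

noncomputable def f (t : ℝ) : ℝ :=
  t * (t + 2) ^ 3 * (2 * t + 1) ^ 3 / ((t ^ 2 + t + 1) ^ 2 * (t ^ 2 + 7 * t + 1) ^ 2)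

noncomputable def g (p : ℕ) (t : ℝ) : ℝ :=
  2 * t ^ p * (t + 2) ^ p * (2 * t + 1) ^ (3 - p) / ((t ^ 2 + t + 1) * (t ^ 2 + 7 * t + 1))

noncomputable def gbar (p : ℕ) (t : ℝ) : ℝ := 4 * f t / g p t

noncomputable def h (t : ℝ) : ℝ :=
  2 + 1 / t + t * (t + 2) ^ 4 / ((t ^ 2 + t + 1) * (t ^ 2 + 7 * t + 1))

/-- The upper-left 5×5 block of the Cartan matrix `C_t`:
diagonal entries `2`, entry `-ḡ_{j-i-1}(t)` above and `-g_{i-j-1}(t)` below the diagonal. -/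
noncomputable def ULblock (t : ℝ) : Matrix (Fin 5) (Fin 5) ℝ := fun i j =>
  if i = j then 2
  else if i < j then -gbar ((j : ℕ) - (i : ℕ) - 1) t
  else -g ((i : ℕ) - (j : ℕ) - 1) t

/-- The lower-right 5×5 block of `C_t`: diagonal `2`, `-1/t` above, `-t` below the diagonal. -/
noncomputable def LRblock (t : ℝ) : Matrix (Fin 5) (Fin 5) ℝ := fun i j =>
  if i = j then 2
  else if i < j then -(1 / t)
  else -t

/-- The 10×10 Cartan matrix `C_t` from the paper, with rows and columns indexed by
`{1',…,5'} ⊕ {1,…,5}`.  The upper-right block is `-h(t)·Id` and the lower-left block `-2·Id`. -/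
noncomputable def C (t : ℝ) : Matrix (Fin 5 ⊕ Fin 5) (Fin 5 ⊕ Fin 5) ℝ :=
  Matrix.fromBlocks (ULblock t) (Matrix.diagonal fun _ => -h t)
    (Matrix.diagonal fun _ => -2) (LRblock t)

set_option maxRecDepth 10000 in
set_option maxHeartbeats 4000000 in
lemma key (t : ℝ) (ht : 0 < t) :
    ULblock t * LRblock t = (2 * h t) • (1 : Matrix (Fin 5) (Fin 5) ℝ) := by
  have h0 : t ≠ 0 := ne_of_gt ht
  have h1 : t ^ 2 + t + 1 ≠ 0 := by positivity
  have h2 : t ^ 2 + 7 * t + 1 ≠ 0 := by positivity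
  have e0 : gbar 0 t = 2 * t * (t + 2) ^ 3 / ((t ^ 2 + t + 1) * (t ^ 2 + 7 * t + 1)) := by
    norm_num [gbar, g, f]; field_simp; ring
  have e1 : gbar 1 t = 2 * (t + 2) ^ 2 * (2 * t + 1) / ((t ^ 2 + t + 1) * (t ^ 2 + 7 * t + 1)) := by
    norm_num [gbar, g, f]; field_simp; ring
  have e2 : gbar 2 t = 2 * (t + 2) * (2 * t + 1) ^ 2 / (t * ((t ^ 2 + t + 1) * (t ^ 2 + 7 * t + 1))) := by
    norm_num [gbar, g, f]; field_simp; ring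
  have e3 : gbar 3 t = 2 * (2 * t + 1) ^ 3 / (t ^ 2 * ((t ^ 2 + t + 1) * (t ^ 2 + 7 * t + 1))) := by
    norm_num [gbar, g, f]; field_simp; ring
  have q0 : g 0 t = 2 * (2 * t + 1) ^ 3 / ((t ^ 2 + t + 1) * (t ^ 2 + 7 * t + 1)) := by
    norm_num [g]
  have q1 : g 1 t = 2 * t * (t + 2) * (2 * t + 1) ^ 2 / ((t ^ 2 + t + 1) * (t ^ 2 + 7 * t + 1)) := by
    norm_num [g]
  have q2 : g 2 t = 2 * t ^ 2 * (t + 2) ^ 2 * (2 * t + 1) / ((t ^ 2 + t + 1) * (t ^ 2 + 7 * t + 1)) := by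
    norm_num [g]
  have q3 : g 3 t = 2 * t ^ 3 * (t + 2) ^ 3 / ((t ^ 2 + t + 1) * (t ^ 2 + 7 * t + 1)) := by
    norm_num [g]
  ext i j
  fin_cases i <;> fin_cases j <;>
    · simp +decide only [Matrix.mul_apply, Fin.sum_univ_five, ULblock, LRblock, Matrix.smul_apply,
        Matrix.one_apply, Fin.lt_def,
        show ((0:Fin 5):ℕ)=0 from rfl, show ((1:Fin 5):ℕ)=1 from rfl,
        show ((2:Fin 5):ℕ)=2 from rfl, show ((3:Fin 5):ℕ)=3 from rfl,
        show ((4:Fin 5):ℕ)=4 from rfl]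
      norm_num
      simp only [h, e0, e1, e2, e3, q0, q1, q2, q3]
      field_simp
      ring

lemma t3_pos : 0 < t3 := by
  have h2 : Real.sqrt 2 ^ 2 = 2 := Real.sq_sqrt (by norm_num)
  have h2' : (1:ℝ) ≤ Real.sqrt 2 := by nlinarith [Real.sqrt_nonneg 2]
  have hb : Real.sqrt (31 + 22 * Real.sqrt 2) < (11 + 9 * Real.sqrt 2) / 3 := by
    rw [show ((11 + 9 * Real.sqrt 2) / 3 : ℝ) = (11 + 9 * Real.sqrt 2) / 3 from rfl]
    rw [Real.sqrt_lt' (by nlinarith)]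
    nlinarith
  unfold t3
  nlinarith

theorem C_rank : ∀ t ∈ Set.Icc t3 1, (C t).rank = 5 := by
  intro t htI
  have ht : 0 < t := lt_of_lt_of_le t3_pos htI.1
  have hk := key t ht
  set E : Matrix (Fin 5 ⊕ Fin 5) (Fin 5) ℝ :=
    Matrix.fromRows ((-(2:ℝ))⁻¹ • ULblock t) (1 : Matrix (Fin 5) (Fin 5) ℝ) with hE
  set F : Matrix (Fin 5) (Fin 5 ⊕ Fin 5) ℝ :=
    Matrix.fromCols (Matrix.diagonal fun _ => (-2:ℝ)) (LRblock t) with hF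
  have hfact : C t = E * F := by
    rw [hE, hF, Matrix.fromRows_mul_fromCols, C]
    have b1 : ((-(2:ℝ))⁻¹ • ULblock t) * (Matrix.diagonal fun _ => (-2:ℝ)) = ULblock t := by
      ext i j
      simp [Matrix.mul_diagonal]
      ring
    have b2 : ((-(2:ℝ))⁻¹ • ULblock t) * LRblock t
        = (Matrix.diagonal fun _ : Fin 5 => -h t) := by
      rw [Matrix.smul_mul, hk, smul_smul]
      ext i j
      rcases eq_or_ne i j with rfl | hij
      · simp [Matrix.one_apply]
      · simp [Matrix.one_apply_ne hij, Matrix.diagonal_apply_ne _ hij]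
    rw [b1, b2, Matrix.one_mul, Matrix.one_mul]
  have hub : (C t).rank ≤ 5 := by
    rw [hfact]
    calc (E * F).rank ≤ F.rank := Matrix.rank_mul_le_right E F
      _ ≤ Fintype.card (Fin 5) := Matrix.rank_le_card_height F
      _ = 5 := by simp
  set R : Matrix (Fin 5) (Fin 5 ⊕ Fin 5) ℝ :=
    Matrix.of (fun i k => if k = Sum.inr i then (1:ℝ) else 0) with hRdef
  set S : Matrix (Fin 5 ⊕ Fin 5) (Fin 5) ℝ :=
    Matrix.of (fun k j => if k = Sum.inl j then (1:ℝ) else 0) with hSdef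
  have hRS : R * (C t * S) = Matrix.diagonal (fun _ : Fin 5 => (-2:ℝ)) := by
    ext i j
    simp [hRdef, hSdef, Matrix.mul_apply, ite_mul, mul_ite, zero_mul, mul_zero, one_mul,
      mul_one, Finset.sum_ite_eq, Finset.sum_ite_eq', C, Matrix.fromBlocks,
      Matrix.diagonal_apply]
  have hdrank : (Matrix.diagonal (fun _ : Fin 5 => (-2:ℝ))).rank = 5 := by
    rw [Matrix.rank_diagonal]
    simp [Fintype.card_subtype, Finset.filter_true_of_mem]
  have hlb : 5 ≤ (C t).rank := by
    calc (5:ℕ) = (R * (C t * S)).rank := by rw [hRS, hdrank]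
      _ ≤ (C t * S).rank := Matrix.rank_mul_le_right R (C t * S)
      _ ≤ (C t).rank := Matrix.rank_mul_le_left (C t) S
  omega
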